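/- There exist a complete lattice L, a map g : 𝒫(L) → 𝒫(L) preserving arbitrary unions, and a map f : L → L preserving arbitrary suprema with sSup (g(X)) = f(sSup X) for all X ⊆ L, such that there is NO map h : DI(L) → DI(L) satisfying h(𝒞(X)) = 𝒞(g(X)) for all X ⊆ L. -/

import Mathlib

/-- A subset `S` of a complete lattice is *distributive* if
`a ⊓ sSup S = ⨆ s ∈ S, a ⊓ s` for every `a`. -/
def IsDistrib {L : Type*} [CompleteLattice L] (S : Set L) : Prop :=
  ∀ a : L, a ⊓ sSup S = ⨆ s ∈ S, a ⊓ s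

/-- A *distributive ideal* is a lower set closed under suprema of its
distributive subsets. -/
def IsDistribIdeal {L : Type*} [CompleteLattice L] (I : Set L) : Prop :=
  IsLowerSet I ∧ ∀ S : Set L, S ⊆ I → IsDistrib S → sSup S ∈ I

/-- The lower set `↓A` generated by `A`. -/
def downSet {L : Type*} [CompleteLattice L] (A : Set L) : Set L :=
  {x | ∃ a ∈ A, x ≤ a}

/-- The closure `𝒞(A) = { sSup B | B ⊆ ↓A, B distributive }`. -/
def distClosure {L : Type*} [CompleteLattice L] (A : Set L) : Set L :=
  {x | ∃ B : Set L, B ⊆ downSet A ∧ IsDistrib B ∧ x = sSup B}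

/-- The property of the counterexample in Statement 12: `g` preserves arbitrary
unions, `f` preserves arbitrary suprema, `sSup (g X) = f (sSup X)` for all `X`,
yet no map `h` on distributive ideals satisfies `h (𝒞 X) = 𝒞 (g X)`. -/
def NoLiftWitness (L : Type) [CompleteLattice L]
    (g : Set L → Set L) (f : L → L) : Prop :=
  (∀ 𝒳 : Set (Set L), g (⋃₀ 𝒳) = ⋃ X ∈ 𝒳, g X) ∧
  (∀ S : Set L, f (sSup S) = ⨆ a ∈ S, f a) ∧
  (∀ X : Set L, sSup (g X) = f (sSup X)) ∧
  ¬ ∃ h : Set L → Set L, ∀ X : Set L, h (distClosure X) = distClosure (g X)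

inductive M3 : Type
  | bot | a | b | c | top
  deriving DecidableEq

instance : Fintype M3 :=
  Fintype.ofList [M3.bot, M3.a, M3.b, M3.c, M3.top] (by intro x; cases x <;> decide)

namespace M3

def ble : M3 → M3 → Bool
  | bot, _ => true
  | _, top => true
  | x, y => x == y

instance : LE M3 := ⟨fun x y => ble x y = true⟩
instance : LT M3 := ⟨fun x y => x ≤ y ∧ ¬ y ≤ x⟩

instance decLE : ∀ x y : M3, Decidable (x ≤ y) := fun x y =>
  inferInstanceAs (Decidable (ble x y = true))

instance : PartialOrder M3 where
  le_refl := by decide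
  le_trans := by decide
  le_antisymm := by decide
  lt_iff_le_not_ge := fun _ _ => Iff.rfl

instance : Lattice M3 where
  sup x y := if x ≤ y then y else if y ≤ x then x else top
  le_sup_left := by decide
  le_sup_right := by decide
  sup_le := by decide
  inf x y := if x ≤ y then x else if y ≤ x then y else bot
  inf_le_left := by decide
  inf_le_right := by decide
  le_inf := by decide

instance : BoundedOrder M3 where
  top := top
  le_top := by decide
  bot := bot
  bot_le := by decide

noncomputable instance : CompleteLattice M3 := Fintype.toCompleteLattice M3


end M3

section Key

open scoped Classical

variable {L : Type} [CompleteLattice L]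

lemma isDistrib_singleton (x : L) : IsDistrib ({x} : Set L) := by
  intro y
  simp [IsDistrib, sSup_singleton]

lemma distClosure_of_top_mem {X : Set L} (hX : ⊤ ∈ X) :
    distClosure X = Set.univ := by
  ext x
  simp only [Set.mem_univ, iff_true]
  exact ⟨{x}, fun y hy => ⟨⊤, hX, le_top⟩, isDistrib_singleton x,
    (sSup_singleton).symm⟩

lemma key (a b c : L)
    (hbc : b ⊔ c = ⊤) (haT : a ≠ ⊤) (hab : ¬ a ≤ b) (hac : ¬ a ≤ c)
    (hb : ∀ x : L, x ≤ b → x = b ∨ x = ⊥) (hc : ∀ x : L, x ≤ c → x = c ∨ x = ⊥) :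
    NoLiftWitness L (fun X => ⋃ x ∈ X, (if x = ⊤ then ({b, c} : Set L) else {x})) id := by
  set G : L → Set L := fun x => if x = ⊤ then ({b, c} : Set L) else {x} with hG
  have hGsup : ∀ x : L, sSup (G x) = x := by
    intro x
    by_cases hx : x = ⊤
    · simp [hG, hx, sSup_pair, hbc]
    · simp [hG, hx]
  refine ⟨?_, ?_, ?_, ?_⟩
  · intro 𝒳
    ext y
    simp only [Set.mem_iUnion, Set.mem_sUnion]
    constructor
    · rintro ⟨x, ⟨X, hX, hxX⟩, hy⟩
      exact ⟨X, hX, x, hxX, hy⟩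
    · rintro ⟨X, hX, x, hxX, hy⟩
      exact ⟨x, ⟨X, hX, hxX⟩, hy⟩
  · intro S
    simp [sSup_eq_iSup]
  · intro X
    show sSup (⋃ x ∈ X, G x) = id (sSup X)
    rw [id]
    apply le_antisymm
    · apply sSup_le
      intro y hy
      simp only [Set.mem_iUnion] at hy
      obtain ⟨x, hx, hyG⟩ := hy
      calc y ≤ sSup (G x) := le_sSup hyG
        _ = x := hGsup x
        _ ≤ sSup X := le_sSup hx
    · apply sSup_le
      intro x hx
      rw [← hGsup x]
      exact sSup_le_sSup fun y hy => Set.mem_biUnion hx hy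
  · rintro ⟨h, hh⟩
    have h1 : distClosure ({⊤} : Set L) = Set.univ := distClosure_of_top_mem rfl
    have h2 : distClosure ({a, ⊤} : Set L) = Set.univ :=
      distClosure_of_top_mem (by right; rfl)
    have e1 := hh ({⊤} : Set L)
    have e2 := hh ({a, ⊤} : Set L)
    rw [h1] at e1
    rw [h2] at e2
    have hgX : (⋃ x ∈ ({⊤} : Set L), G x) = ({b, c} : Set L) := by
      simp [hG]
    have hgY : (⋃ x ∈ ({a, ⊤} : Set L), G x) = ({a, b, c} : Set L) := by
      ext y
      simp only [hG, haT, Set.mem_insert_iff, Set.mem_iUnion, Set.mem_singleton_iff]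
      constructor
      · rintro ⟨x, hx | hx, hy⟩ <;> subst hx <;> simp_all
      · rintro (h | h | h)
        · exact ⟨a, Or.inl rfl, by simp [haT, h]⟩
        · exact ⟨⊤, Or.inr rfl, by simp [h]⟩
        · exact ⟨⊤, Or.inr rfl, by simp [h]⟩
    have heq : distClosure ({b, c} : Set L) = distClosure ({a, b, c} : Set L) := by
      rw [← hgY, ← hgX, ← e1, ← e2]
    have haY : a ∈ distClosure ({a, b, c} : Set L) :=
      ⟨{a}, fun y hy => ⟨a, Or.inl rfl, le_of_eq (by simpa using hy)⟩,
        isDistrib_singleton a, (sSup_singleton).symm⟩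
    rw [← heq] at haY
    obtain ⟨B, hB, -, haB⟩ := haY
    have hcB : c ≤ a := by
      by_cases h1 : ∀ x ∈ B, x ≤ b
      · exact absurd (haB ▸ sSup_le h1) hab
      · push_neg at h1
        obtain ⟨x, hxB, hxb⟩ := h1
        obtain ⟨y, hy, hxy⟩ := hB hxB
        rcases hy with rfl | hy
        · exact absurd hxy hxb
        · rcases hc x (by rwa [Set.mem_singleton_iff.mp hy] at hxy) with rfl | rfl
          · exact haB ▸ le_sSup hxB
          · exact absurd bot_le hxb
    have hbB : b ≤ a := by
      by_cases h1 : ∀ x ∈ B, x ≤ c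
      · exact absurd (haB ▸ sSup_le h1) hac
      · push_neg at h1
        obtain ⟨x, hxB, hxc⟩ := h1
        obtain ⟨y, hy, hxy⟩ := hB hxB
        rcases hy with rfl | hy
        · rcases hb x hxy with rfl | rfl
          · exact haB ▸ le_sSup hxB
          · exact absurd bot_le hxc
        · exact absurd (Set.mem_singleton_iff.mp hy ▸ hxy) hxc
    have : (⊤ : L) ≤ a := hbc ▸ sup_le hbB hcB
    exact haT (top_le_iff.mp this)

end Key

/-- There exist a complete lattice `L`, a union-preserving `g : 𝒫(L) → 𝒫(L)`
and a suprema-preserving `f : L → L` with `sSup (g X) = f (sSup X)` for all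
`X`, such that no map `h : DI(L) → DI(L)` satisfies `h (𝒞 X) = 𝒞 (g X)`. -/
theorem exists_no_lift :
    ∃ (L : Type) (inst : CompleteLattice L) (g : Set L → Set L) (f : L → L),
      @NoLiftWitness L inst g f := by
  refine ⟨M3, inferInstance, _, _, key M3.a M3.b M3.c ?_ ?_ ?_ ?_ ?_ ?_⟩ <;> decide
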